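/- There exists a function $\varphi \in C^1((0,\infty))$ with: (i) $\lim_{x\downarrow 0}\varphi(x) = -\infty$, $\varphi' > 0$ everywhere, $\varphi$ twice continuously differentiable on $(0,\varepsilon]$ and on $[\varepsilon,\infty)$ with $\varphi''(x) > 0$ for $x > \varepsilon$; and (ii) for a.e. $t \in [0,T]$ and all $x > 0$ with $x \neq \varepsilon$: $\tfrac{1}{2}\eta(t,x)^2\varphi''(x) + \zeta(t,x)\varphi'(x) \geq -c_0(t)\varphi_0(x)$ whenever $x < \varepsilon$, and $\geq -c_\zeta(t)\varphi_\zeta(x)\varphi'(x)$ whenever $x > \varepsilon$. Explicitly one may take $\varphi(x) = \log x$ for $x < \varepsilon$ and $\varphi(x) = \log\varepsilon + \int_\varepsilon^x \hat{\varphi}(y)\,dy$ for $x \geq \varepsilon$, where $\hat{\varphi}(x) = \tfrac{1}{\varepsilon}\exp(\int_\varepsilon^x \varphi_\zeta(y)^{-1}\,dy)$. -/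

import Mathlib

open MeasureTheory Set Function
open scoped ENNReal Topology


noncomputable def auxG (ε : ℝ) (φζ : ℝ → ℝ) (y : ℝ) : ℝ :=
  (1 / ε) * Real.exp (∫ z in ε..y, (φζ z)⁻¹)

noncomputable def auxF (ε : ℝ) (φζ : ℝ → ℝ) (x : ℝ) : ℝ :=
  Real.log ε + ∫ y in ε..x, auxG ε φζ y

noncomputable def auxPhi (ε : ℝ) (φζ : ℝ → ℝ) (x : ℝ) : ℝ :=
  if x < ε then Real.log x else auxF ε φζ x

section Aux

variable {ε : ℝ} {φζ : ℝ → ℝ} (hε : 0 < ε) (hφζcont : ContinuousOn φζ (Ici ε))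
  (hφζpos : ∀ v ∈ Ici ε, 0 < φζ v)

include hφζcont hφζpos

lemma auxInv_contOn : ContinuousOn (fun z => (φζ z)⁻¹) (Ici ε) :=
  hφζcont.inv₀ fun v hv => (hφζpos v hv).ne'

lemma auxInv_intInt {y : ℝ} (hy : ε ≤ y) :
    IntervalIntegrable (fun z => (φζ z)⁻¹) volume ε y :=
  ContinuousOn.intervalIntegrable <| by
    rw [uIcc_of_le hy]
    exact (auxInv_contOn hφζcont hφζpos).mono Icc_subset_Ici_self

lemma auxH_hasDerivAt {x : ℝ} (hx : ε < x) :
    HasDerivAt (fun y => ∫ z in ε..y, (φζ z)⁻¹) ((φζ x)⁻¹) x := by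
  apply intervalIntegral.integral_hasDerivAt_right (auxInv_intInt hφζcont hφζpos hx.le)
  · exact ContinuousOn.stronglyMeasurableAtFilter isOpen_Ioi
      (((auxInv_contOn hφζcont hφζpos)).mono Ioi_subset_Ici_self) x hx
  · exact (auxInv_contOn hφζcont hφζpos).continuousAt (Ici_mem_nhds hx)

lemma auxH_hasDerivWithinAt {x : ℝ} (hx : x ∈ Ici ε) :
    HasDerivWithinAt (fun y => ∫ z in ε..y, (φζ z)⁻¹) ((φζ x)⁻¹) (Ici ε) x := by
  rcases eq_or_lt_of_le (mem_Ici.mp hx) with rfl | hlt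
  · have hmeas : StronglyMeasurableAtFilter (fun z => (φζ z)⁻¹) (𝓝[Ioi ε] ε) volume :=
      ((auxInv_contOn hφζcont hφζpos).mono Ioi_subset_Ici_self).stronglyMeasurableAtFilter_nhdsWithin
        measurableSet_Ioi ε
    have hcont : ContinuousWithinAt (fun z => (φζ z)⁻¹) (Ioi ε) ε :=
      ((auxInv_contOn hφζcont hφζpos) ε self_mem_Ici).mono Ioi_subset_Ici_self
    exact intervalIntegral.integral_hasDerivWithinAt_right
      (auxInv_intInt hφζcont hφζpos le_rfl) hmeas hcont
  · exact (auxH_hasDerivAt hφζcont hφζpos hlt).hasDerivWithinAt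

lemma auxG_hasDerivWithinAt {x : ℝ} (hx : x ∈ Ici ε) :
    HasDerivWithinAt (auxG ε φζ) ((φζ x)⁻¹ * auxG ε φζ x) (Ici ε) x := by
  have h := ((Real.hasDerivAt_exp _).comp_hasDerivWithinAt x
    (auxH_hasDerivWithinAt hφζcont hφζpos hx)).const_mul (1 / ε)
  have : (1 / ε) * (Real.exp (∫ z in ε..x, (φζ z)⁻¹) * (φζ x)⁻¹)
      = (φζ x)⁻¹ * auxG ε φζ x := by unfold auxG; ring
  rw [this] at h
  exact h

lemma auxG_hasDerivAt {x : ℝ} (hx : ε < x) :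
    HasDerivAt (auxG ε φζ) ((φζ x)⁻¹ * auxG ε φζ x) x := by
  have h := ((Real.hasDerivAt_exp _).comp x (auxH_hasDerivAt hφζcont hφζpos hx)).const_mul (1 / ε)
  have : (1 / ε) * (Real.exp (∫ z in ε..x, (φζ z)⁻¹) * (φζ x)⁻¹)
      = (φζ x)⁻¹ * auxG ε φζ x := by unfold auxG; ring
  rw [this] at h
  exact h

lemma auxG_contOn : ContinuousOn (auxG ε φζ) (Ici ε) := fun x hx =>
  (auxG_hasDerivWithinAt hφζcont hφζpos hx).continuousWithinAt

lemma auxG_intInt {x : ℝ} (hx : ε ≤ x) :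
    IntervalIntegrable (auxG ε φζ) volume ε x :=
  ContinuousOn.intervalIntegrable <| by
    rw [uIcc_of_le hx]
    exact (auxG_contOn hφζcont hφζpos).mono Icc_subset_Ici_self

lemma auxF_hasDerivWithinAt {x : ℝ} (hx : x ∈ Ici ε) :
    HasDerivWithinAt (auxF ε φζ) (auxG ε φζ x) (Ici ε) x := by
  unfold auxF
  apply HasDerivWithinAt.const_add
  rcases eq_or_lt_of_le (mem_Ici.mp hx) with rfl | hlt
  · have hmeas : StronglyMeasurableAtFilter (auxG ε φζ) (𝓝[Ioi ε] ε) volume :=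
      ((auxG_contOn hφζcont hφζpos).mono Ioi_subset_Ici_self).stronglyMeasurableAtFilter_nhdsWithin
        measurableSet_Ioi ε
    have hcont : ContinuousWithinAt (auxG ε φζ) (Ioi ε) ε :=
      ((auxG_contOn hφζcont hφζpos) ε self_mem_Ici).mono Ioi_subset_Ici_self
    exact intervalIntegral.integral_hasDerivWithinAt_right
      (auxG_intInt hφζcont hφζpos le_rfl) hmeas hcont
  · refine (intervalIntegral.integral_hasDerivAt_right (auxG_intInt hφζcont hφζpos hlt.le)
      ?_ ?_).hasDerivWithinAt
    · exact ContinuousOn.stronglyMeasurableAtFilter isOpen_Ioi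
        ((auxG_contOn hφζcont hφζpos).mono Ioi_subset_Ici_self) x hlt
    · exact (auxG_contOn hφζcont hφζpos).continuousAt (Ici_mem_nhds hlt)

lemma auxF_hasDerivAt {x : ℝ} (hx : ε < x) :
    HasDerivAt (auxF ε φζ) (auxG ε φζ x) x := by
  unfold auxF
  apply HasDerivAt.const_add
  refine intervalIntegral.integral_hasDerivAt_right (auxG_intInt hφζcont hφζpos hx.le) ?_ ?_
  · exact ContinuousOn.stronglyMeasurableAtFilter isOpen_Ioi
      ((auxG_contOn hφζcont hφζpos).mono Ioi_subset_Ici_self) x hx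
  · exact (auxG_contOn hφζcont hφζpos).continuousAt (Ici_mem_nhds hx)

end Aux

lemma auxG_pos {ε : ℝ} {φζ : ℝ → ℝ} (hε : 0 < ε) {y : ℝ} : 0 < auxG ε φζ y := by
  unfold auxG; positivity

lemma auxG_at_eps {ε : ℝ} {φζ : ℝ → ℝ} : auxG ε φζ ε = ε⁻¹ := by
  simp [auxG]

lemma auxPhi_eq_log {ε : ℝ} {φζ : ℝ → ℝ} {x : ℝ} (hx : x ≤ ε) :
    auxPhi ε φζ x = Real.log x := by
  rcases lt_or_eq_of_le hx with h | rfl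
  · simp [auxPhi, h]
  · simp [auxPhi, auxF]

lemma auxPhi_eq_F {ε : ℝ} {φζ : ℝ → ℝ} {x : ℝ} (hx : ε ≤ x) :
    auxPhi ε φζ x = auxF ε φζ x := by
  simp [auxPhi, not_lt.2 hx]

noncomputable def auxPsi (ε : ℝ) (φζ : ℝ → ℝ) (x : ℝ) : ℝ :=
  if x < ε then x⁻¹ else auxG ε φζ x

section Aux2

variable {ε : ℝ} {φζ : ℝ → ℝ} (hε : 0 < ε) (hφζcont : ContinuousOn φζ (Ici ε))
  (hφζpos : ∀ v ∈ Ici ε, 0 < φζ v)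

lemma auxPsi_at_eps : auxPsi ε φζ ε = ε⁻¹ := by
  simp [auxPsi, auxG_at_eps]

include hε in
lemma auxPsi_pos {x : ℝ} (hx : 0 < x) : 0 < auxPsi ε φζ x := by
  unfold auxPsi
  split
  · exact inv_pos.2 hx
  · exact auxG_pos hε

include hε hφζcont hφζpos

lemma auxPhi_hasDerivAt {x : ℝ} (hx : 0 < x) :
    HasDerivAt (auxPhi ε φζ) (auxPsi ε φζ x) x := by
  rcases lt_trichotomy x ε with hlt | heq | hgt
  · rw [show auxPsi ε φζ x = x⁻¹ from if_pos hlt]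
    refine (Real.hasDerivAt_log hx.ne').congr_of_eventuallyEq ?_
    exact Filter.eventuallyEq_of_mem (Iio_mem_nhds hlt) fun y hy => auxPhi_eq_log (le_of_lt hy)
  · subst heq
    rw [auxPsi_at_eps]
    have left : HasDerivWithinAt (auxPhi x φζ) x⁻¹ (Iic x) x :=
      ((Real.hasDerivAt_log hε.ne').hasDerivWithinAt).congr
        (fun y hy => auxPhi_eq_log hy) (auxPhi_eq_log le_rfl)
    have right : HasDerivWithinAt (auxPhi x φζ) x⁻¹ (Ici x) x := by
      have h := auxF_hasDerivWithinAt hφζcont hφζpos (self_mem_Ici (a := x))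
      rw [auxG_at_eps] at h
      exact h.congr (fun y hy => auxPhi_eq_F hy) (auxPhi_eq_F le_rfl)
    have h := left.union right
    rw [Iic_union_Ici] at h
    exact hasDerivWithinAt_univ.1 h
  · rw [show auxPsi ε φζ x = auxG ε φζ x from if_neg (not_lt.2 hgt.le)]
    refine (auxF_hasDerivAt hφζcont hφζpos hgt).congr_of_eventuallyEq ?_
    exact Filter.eventuallyEq_of_mem (Ioi_mem_nhds hgt) fun y hy => auxPhi_eq_F (le_of_lt hy)

lemma auxPhi_deriv {x : ℝ} (hx : 0 < x) :
    deriv (auxPhi ε φζ) x = auxPsi ε φζ x :=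
  (auxPhi_hasDerivAt hε hφζcont hφζpos hx).deriv

lemma auxPsi_contOn : ContinuousOn (auxPsi ε φζ) (Ioi 0) := by
  intro x hx
  rcases lt_trichotomy x ε with hlt | heq | hgt
  · refine ContinuousAt.continuousWithinAt ?_
    refine (continuousAt_inv₀ (ne_of_gt hx)).congr ?_
    exact (Filter.eventuallyEq_of_mem (Iio_mem_nhds hlt) fun y hy => if_pos hy).symm
  · subst heq
    refine ContinuousAt.continuousWithinAt ?_
    have left : ContinuousWithinAt (auxPsi x φζ) (Iic x) x := by
      refine ((continuousAt_inv₀ (ne_of_gt hε)).continuousWithinAt).congr ?_ auxPsi_at_eps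
      intro y hy
      rcases lt_or_eq_of_le (mem_Iic.mp hy) with h | heq2
      · exact if_pos h
      · subst heq2; exact auxPsi_at_eps
    have right : ContinuousWithinAt (auxPsi x φζ) (Ici x) x := by
      refine (auxG_contOn hφζcont hφζpos x self_mem_Ici).congr ?_ ?_
      · intro y hy; exact if_neg (not_lt.2 hy)
      · exact if_neg (lt_irrefl x)
    have h := left.union right
    rwa [Iic_union_Ici, continuousWithinAt_univ] at h
  · refine ContinuousAt.continuousWithinAt ?_
    refine ((auxG_contOn hφζcont hφζpos).continuousAt (Ici_mem_nhds hgt)).congr ?_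
    exact (Filter.eventuallyEq_of_mem (Ioi_mem_nhds hgt)
      fun y hy => if_neg (not_lt.2 (le_of_lt hy))).symm

lemma auxPhi_deriv2_lt {x : ℝ} (hx0 : 0 < x) (hx : x < ε) :
    deriv (deriv (auxPhi ε φζ)) x = -(x ^ 2)⁻¹ := by
  have e1 : deriv (auxPhi ε φζ) =ᶠ[𝓝 x] fun y => y⁻¹ := by
    refine Filter.eventuallyEq_of_mem (isOpen_Ioo.mem_nhds (⟨hx0, hx⟩ : x ∈ Ioo 0 ε)) ?_
    intro y hy
    rw [auxPhi_deriv hε hφζcont hφζpos hy.1]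
    exact if_pos hy.2
  rw [e1.deriv_eq, deriv_inv]

lemma auxPhi_deriv2_gt {x : ℝ} (hx : ε < x) :
    deriv (deriv (auxPhi ε φζ)) x = (φζ x)⁻¹ * auxG ε φζ x := by
  have e1 : deriv (auxPhi ε φζ) =ᶠ[𝓝 x] auxG ε φζ := by
    refine Filter.eventuallyEq_of_mem (Ioi_mem_nhds hx) ?_
    intro y hy
    rw [auxPhi_deriv hε hφζcont hφζpos (hε.trans hy)]
    exact if_neg (not_lt.2 (le_of_lt hy))
  rw [e1.deriv_eq]
  exact (auxG_hasDerivAt hφζcont hφζpos hx).deriv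

end Aux2

/-- Lyapunov function for the positivity proof: under (V.7) there is
`φ ∈ C¹((0,∞))` with `φ(0+) = -∞`, `φ' > 0`, `φ` twice continuously differentiable on
`(0,ε]` and `[ε,∞)` with `φ'' > 0` on `(ε,∞)`, such that a.e. in `t`:
`½η(t,x)²φ''(x) + ζ(t,x)φ'(x) ≥ -c₀(t)φ₀(x)` for `x < ε` and
`≥ -c_ζ(t)φ_ζ(x)φ'(x)` for `x > ε`; explicitly `φ(x) = log x` for `x < ε` and
`φ(x) = log ε + ∫_ε^x (1/ε) exp(∫_ε^y φ_ζ(z)⁻¹ dz) dy` for `x ≥ ε`. -/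
theorem stmt11 (T : ℝ) (hT : 0 < T)
    (ζ η : ℝ → ℝ → ℝ)
    (hζmeas : Measurable (uncurry ζ)) (hηmeas : Measurable (uncurry η))
    (ε : ℝ) (hε : 0 < ε)
    (c₀ cζ : ℝ → ℝ)
    (hc₀ : IntegrableOn c₀ (Icc 0 T)) (hc₀0 : ∀ t, 0 ≤ c₀ t)
    (hcζ : IntegrableOn cζ (Icc 0 T)) (hcζ0 : ∀ t, 0 ≤ cζ t)
    (φ₀ : ℝ → ℝ) (hφ₀mono : MonotoneOn φ₀ (Ioc 0 ε))
    (hφ₀nonneg : ∀ v ∈ Ioc (0:ℝ) ε, 0 ≤ φ₀ v)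
    (φζ : ℝ → ℝ) (hφζmono : MonotoneOn φζ (Ici ε)) (hφζcont : ContinuousOn φζ (Ici ε))
    (hφζpos : ∀ v ∈ Ici ε, 0 < φζ v)
    (hV7 : ∀ᵐ t ∂(volume.restrict (Icc 0 T)),
      (∀ v ∈ Ioo (0:ℝ) ε, η t v ^ 2 / (2 * v ^ 2) ≤ ζ t v / v + c₀ t * φ₀ v) ∧
      (∀ v ∈ Ici ε, -(cζ t * φζ v) ≤ ζ t v)) :
    ∃ φ : ℝ → ℝ,
      -- the explicit choice
      (∀ x ∈ Ioo (0:ℝ) ε, φ x = Real.log x) ∧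
      (∀ x ∈ Ici ε, φ x = Real.log ε
        + ∫ y in ε..x, (1 / ε) * Real.exp (∫ z in ε..y, (φζ z)⁻¹)) ∧
      -- (i)
      ContDiffOn ℝ 1 φ (Ioi 0) ∧
      Filter.Tendsto φ (nhdsWithin 0 (Ioi 0)) Filter.atBot ∧
      (∀ x : ℝ, 0 < x → 0 < deriv φ x) ∧
      ContDiffOn ℝ 2 φ (Ioc 0 ε) ∧ ContDiffOn ℝ 2 φ (Ici ε) ∧
      (∀ x : ℝ, ε < x → 0 < deriv (deriv φ) x) ∧
      -- (ii)
      (∀ᵐ t ∂(volume.restrict (Icc 0 T)), ∀ x : ℝ, 0 < x → x ≠ ε →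
        (x < ε → -(c₀ t * φ₀ x) ≤
          (1 / 2) * η t x ^ 2 * deriv (deriv φ) x + ζ t x * deriv φ x) ∧
        (ε < x → -(cζ t * φζ x * deriv φ x) ≤
          (1 / 2) * η t x ^ 2 * deriv (deriv φ) x + ζ t x * deriv φ x)) := by
  refine ⟨auxPhi ε φζ, ?_, ?_, ?_, ?_, ?_, ?_, ?_, ?_, ?_⟩
  · -- φ = log on (0, ε)
    exact fun x hx => auxPhi_eq_log hx.2.le
  · -- φ = explicit formula on [ε, ∞)
    intro x hx
    rw [auxPhi_eq_F hx]
    rfl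
  · -- C¹ on (0, ∞)
    rw [show (1 : WithTop ℕ∞) = 0 + 1 by norm_num,
      contDiffOn_succ_iff_deriv_of_isOpen isOpen_Ioi]
    refine ⟨fun x hx => (auxPhi_hasDerivAt hε hφζcont hφζpos hx).differentiableAt.differentiableWithinAt,
      by simp, ?_⟩
    rw [contDiffOn_zero]
    exact (auxPsi_contOn hε hφζcont hφζpos).congr
      fun x hx => auxPhi_deriv hε hφζcont hφζpos hx
  · -- tendsto atBot at 0⁺
    refine Real.tendsto_log_nhdsGT_zero.congr' ?_
    exact (Filter.eventuallyEq_of_mem (nhdsWithin_le_nhds (Iio_mem_nhds hε))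
      fun y hy => auxPhi_eq_log (le_of_lt hy)).symm
  · -- deriv pos
    intro x hx
    rw [auxPhi_deriv hε hφζcont hφζpos hx]
    exact auxPsi_pos hε hx
  · -- C² on (0, ε]
    refine (Real.contDiffOn_log.mono ?_).congr fun x hx => auxPhi_eq_log hx.2
    intro x hx
    simpa using (ne_of_gt hx.1)
  · -- C² on [ε, ∞)
    refine ContDiffOn.congr ?_ fun x hx => auxPhi_eq_F hx
    rw [show (2 : WithTop ℕ∞) = 1 + 1 by norm_num,
      contDiffOn_succ_iff_derivWithin (uniqueDiffOn_Ici ε)]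
    refine ⟨fun x hx => (auxF_hasDerivWithinAt hφζcont hφζpos hx).differentiableWithinAt,
      by simp, ?_⟩
    refine ContDiffOn.congr ?_ fun x hx =>
      (auxF_hasDerivWithinAt hφζcont hφζpos hx).derivWithin (uniqueDiffOn_Ici ε x hx)
    rw [show (1 : WithTop ℕ∞) = 0 + 1 by norm_num,
      contDiffOn_succ_iff_derivWithin (uniqueDiffOn_Ici ε)]
    refine ⟨fun x hx => (auxG_hasDerivWithinAt hφζcont hφζpos hx).differentiableWithinAt,
      by simp, ?_⟩
    rw [contDiffOn_zero]
    refine ContinuousOn.congr ((auxInv_contOn hφζcont hφζpos).mul (auxG_contOn hφζcont hφζpos))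
      fun x hx => (auxG_hasDerivWithinAt hφζcont hφζpos hx).derivWithin (uniqueDiffOn_Ici ε x hx)
  · -- second derivative positive on (ε, ∞)
    intro x hx
    rw [auxPhi_deriv2_gt hε hφζcont hφζpos hx]
    exact mul_pos (inv_pos.2 (hφζpos x hx.le)) (auxG_pos hε)
  · -- the a.e. differential inequalities
    filter_upwards [hV7] with t ht
    intro x hx0 _
    constructor
    · intro hlt
      rw [auxPhi_deriv hε hφζcont hφζpos hx0,
        show auxPsi ε φζ x = x⁻¹ from if_pos hlt,
        auxPhi_deriv2_lt hε hφζcont hφζpos hx0 hlt]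
      have h := ht.1 x ⟨hx0, hlt⟩
      have hx2 : (0:ℝ) < x ^ 2 := by positivity
      have e : (1/2) * η t x ^ 2 * (-(x ^ 2)⁻¹) + ζ t x * x⁻¹
          = ζ t x / x - η t x ^ 2 / (2 * x ^ 2) := by
        field_simp
        ring
      rw [e]
      linarith
    · intro hgt
      rw [auxPhi_deriv hε hφζcont hφζpos hx0,
        show auxPsi ε φζ x = auxG ε φζ x from if_neg (not_lt.2 hgt.le),
        auxPhi_deriv2_gt hε hφζcont hφζpos hgt]
      have hζx := ht.2 x hgt.le
      have hG : 0 < auxG ε φζ x := auxG_pos hε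
      have hφζx := hφζpos x hgt.le
      have h1 : -(cζ t * φζ x) * auxG ε φζ x ≤ ζ t x * auxG ε φζ x :=
        mul_le_mul_of_nonneg_right hζx hG.le
      have h2 : 0 ≤ (1/2) * η t x ^ 2 * ((φζ x)⁻¹ * auxG ε φζ x) := by positivity
      nlinarith [h1, h2]
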